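/- Fix ε ∈ (0,1] and set λ_t = ε·t^{-3/4} for t ≥ 1. Given a sequence (j_t)_{t≥1} with j_t ∈ {0,1}, define sequences (x_t)_{t≥1} and (α_t)_{t≥1} recursively by: α_t = ∏_{s=1}^{t-1}(1 − x_s) (so α_1 = 1); R¹_{t-1} = max(0, ∑_{s=1}^{t-1} α_s x_s (1 − 2j_s)) and R²_{t-1} = max(0, ∑_{s=1}^{t-1} α_s (λ_s^{-1} x_s − 1)(1 − 2j_s)); and x_t = 0 if (R¹_{t-1}, R²_{t-1}) = (0,0), and x_t = λ_t²·R²_{t-1} / (R¹_{t-1} + λ_t·R²_{t-1}) otherwise. Then for every T ≥ 1: (1/T)·∑_{t=1}^T α_t (λ_t^{-1} x_t − 1)(1 − 2j_t) ≤ 3ε/(T·λ_T); in particular this is at most 3ε² whenever T ≥ ε^{-8}. -/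

import Mathlib

open Finset

lemma rpow_neg_half (y : ℝ) (hy : 0 < y) : y ^ (-(1:ℝ)/2) = (Real.sqrt y)⁻¹ := by
  rw [show (-(1:ℝ)/2) = -(1/2) by norm_num, Real.rpow_neg hy.le, Real.sqrt_eq_rpow]

lemma rpow_neg_threehalf (y : ℝ) (hy : 0 < y) : y ^ (-(3:ℝ)/2) = ((Real.sqrt y)^3)⁻¹ := by
  rw [show (-(3:ℝ)/2) = -(3/2) by norm_num, Real.rpow_neg hy.le, Real.sqrt_eq_rpow,
    ← Real.rpow_natCast (y ^ ((1:ℝ)/2)) 3, ← Real.rpow_mul hy.le]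
  norm_num

lemma sum_rpow_bound : ∀ T : ℕ, 1 ≤ T →
    ∑ s ∈ Icc 1 T, (s:ℝ)^(-(3:ℝ)/2) ≤ 3 - 2 * (T:ℝ)^(-(1:ℝ)/2) := by
  intro T hT
  induction T, hT using Nat.le_induction with
  | base => simp [Real.one_rpow]; norm_num
  | succ T hT ih =>
    rw [Finset.sum_Icc_succ_top (by omega : 1 ≤ T + 1)]
    have hT0 : (0:ℝ) < T := by exact_mod_cast hT
    have hT1 : (0:ℝ) < (T:ℝ) + 1 := by linarith
    have hcast : ((T+1 : ℕ) : ℝ) = (T:ℝ) + 1 := by push_cast; ring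
    rw [hcast]
    set a := Real.sqrt T with ha
    set b := Real.sqrt ((T:ℝ)+1) with hb
    have ha0 : 0 < a := Real.sqrt_pos.mpr hT0
    have hb0 : 0 < b := Real.sqrt_pos.mpr hT1
    have ha2 : a^2 = T := Real.sq_sqrt hT0.le
    have hb2 : b^2 = (T:ℝ)+1 := Real.sq_sqrt hT1.le
    rw [rpow_neg_half _ hT1, rpow_neg_threehalf _ hT1, ← hb]
    rw [rpow_neg_half _ hT0, ← ha] at ih
    have hb2' : b^2 = a^2 + 1 := by rw [hb2, ha2]
    have h1 : a * (2*a^2+3) ≤ 2*b*(a^2+1) := by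
      have hsq : (a * (2*a^2+3))^2 ≤ (2*b*(a^2+1))^2 := by nlinarith [sq_nonneg a, sq_nonneg (a^2)]
      have := pow_le_pow_iff_left₀ (by positivity : (0:ℝ) ≤ a * (2*a^2+3))
        (by positivity : (0:ℝ) ≤ 2*b*(a^2+1)) (two_ne_zero)
      exact this.mp hsq
    have key : (b^3)⁻¹ + 2 * b⁻¹ ≤ 2 * a⁻¹ := by
      have e1 : (b^3)⁻¹ + 2 * b⁻¹ = (1 + 2*b^2) / b^3 := by field_simp
      have e2 : 2 * a⁻¹ = 2 / a := by ring
      rw [e1, e2, div_le_div_iff₀ (by positivity) (by positivity)]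
      nlinarith [h1, hb2']
    linarith

set_option maxHeartbeats 2000000 in
/-- Second-component guarantee of Blackwell's algorithm in the auxiliary approachability problem of the Big Match: `(1/T) ∑_{t=1}^T α_t (λ_t⁻¹ x_t − 1)(1 − 2j_t) ≤ 3ε/(T λ_T)`, which is at most `3ε²` whenever `T ≥ ε⁻⁸`. -/
theorem big_match_second_component_bound
    (ε : ℝ) (hε : ε ∈ Set.Ioc (0 : ℝ) 1)
    (lam : ℕ → ℝ) (hlam : ∀ t : ℕ, 1 ≤ t → lam t = ε * (t : ℝ) ^ (-(3 : ℝ) / 4))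
    (j : ℕ → ℝ) (hj : ∀ t, j t = 0 ∨ j t = 1)
    (x α : ℕ → ℝ)
    (hα : ∀ t, α t = ∏ s ∈ Finset.Icc 1 (t - 1), (1 - x s))
    (R1 R2 : ℕ → ℝ)
    (hR1 : ∀ t, R1 t = max 0 (∑ s ∈ Finset.Icc 1 t, α s * x s * (1 - 2 * j s)))
    (hR2 : ∀ t, R2 t =
      max 0 (∑ s ∈ Finset.Icc 1 t, α s * ((lam s)⁻¹ * x s - 1) * (1 - 2 * j s)))
    (hx : ∀ t : ℕ, 1 ≤ t →
      x t = if R1 (t - 1) = 0 ∧ R2 (t - 1) = 0 then 0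
        else lam t ^ 2 * R2 (t - 1) / (R1 (t - 1) + lam t * R2 (t - 1))) :
    ∀ T : ℕ, 1 ≤ T →
      (T : ℝ)⁻¹ * (∑ t ∈ Finset.Icc 1 T,
          α t * ((lam t)⁻¹ * x t - 1) * (1 - 2 * j t)) ≤
        3 * ε / ((T : ℝ) * lam T) ∧
      (ε ^ (-8 : ℤ) ≤ (T : ℝ) →
        (T : ℝ)⁻¹ * (∑ t ∈ Finset.Icc 1 T,
            α t * ((lam t)⁻¹ * x t - 1) * (1 - 2 * j t)) ≤ 3 * ε ^ 2) := by
  obtain ⟨hε0, hε1⟩ := hε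
  have hlam_pos : ∀ t : ℕ, 1 ≤ t → 0 < lam t := by
    intro t ht
    rw [hlam t ht]
    have : (0:ℝ) < t := by exact_mod_cast ht
    positivity
  have hlam_le : ∀ t : ℕ, 1 ≤ t → lam t ≤ ε := by
    intro t ht
    rw [hlam t ht]
    have h1 : (1:ℝ) ≤ (t:ℝ) := by exact_mod_cast ht
    have := Real.rpow_le_one_of_one_le_of_nonpos h1 (by norm_num : (-(3:ℝ)/4) ≤ 0)
    nlinarith
  have hlam_anti : ∀ s t : ℕ, 1 ≤ s → s ≤ t → lam t ≤ lam s := by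
    intro s t hs hst
    rw [hlam s hs, hlam t (hs.trans hst)]
    have h0 : (0:ℝ) < s := by exact_mod_cast hs
    have h1 : (s:ℝ) ≤ t := by exact_mod_cast hst
    have := Real.rpow_le_rpow_of_nonpos h0 h1 (by norm_num : (-(3:ℝ)/4) ≤ 0)
    nlinarith
  have hR1n : ∀ t, 0 ≤ R1 t := fun t => by rw [hR1]; exact le_max_left _ _
  have hR2n : ∀ t, 0 ≤ R2 t := fun t => by rw [hR2]; exact le_max_left _ _
  have hden : ∀ t : ℕ, 1 ≤ t → ¬(R1 (t-1) = 0 ∧ R2 (t-1) = 0) →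
      0 < R1 (t-1) + lam t * R2 (t-1) := by
    intro t ht h
    rcases not_and_or.mp h with h' | h'
    · have : 0 < R1 (t-1) := lt_of_le_of_ne (hR1n _) (Ne.symm h')
      nlinarith [hR2n (t-1), (hlam_pos t ht)]
    · have : 0 < R2 (t-1) := lt_of_le_of_ne (hR2n _) (Ne.symm h')
      nlinarith [hR1n (t-1), (hlam_pos t ht)]
  have hx0 : ∀ t : ℕ, 1 ≤ t → 0 ≤ x t := by
    intro t ht
    rw [hx t ht]
    split_ifs with h
    · exact le_refl _
    · exact div_nonneg (by nlinarith [hR2n (t-1), sq_nonneg (lam t)]) (hden t ht h).le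
  have hxle : ∀ t : ℕ, 1 ≤ t → x t ≤ lam t := by
    intro t ht
    rw [hx t ht]
    split_ifs with h
    · exact (hlam_pos t ht).le
    · rw [div_le_iff₀ (hden t ht h)]
      nlinarith [hR1n (t-1), hR2n (t-1), hlam_pos t ht]
  have hα01 : ∀ t, 0 ≤ α t ∧ α t ≤ 1 := by
    intro t
    rw [hα t]
    constructor
    · apply Finset.prod_nonneg
      intro s hs
      have hs1 : 1 ≤ s := (Finset.mem_Icc.mp hs).1
      have := hxle s hs1
      have := hlam_le s hs1
      linarith
    · apply Finset.prod_le_one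
      · intro s hs
        have hs1 : 1 ≤ s := (Finset.mem_Icc.mp hs).1
        have := hxle s hs1
        have := hlam_le s hs1
        linarith
      · intro s hs
        have := hx0 s (Finset.mem_Icc.mp hs).1
        linarith
  have hd2 : ∀ t, (1 - 2 * j t)^2 = 1 := by
    intro t
    rcases hj t with h | h <;> rw [h] <;> norm_num
  have hg1sq : ∀ t : ℕ, 1 ≤ t → (α t * x t * (1 - 2 * j t))^2 ≤ (lam t)^2 := by
    intro t ht
    have h1 := hα01 t
    have h2 := hx0 t ht
    have h3 := hxle t ht
    have h4 := hd2 t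
    have he : (α t * x t * (1 - 2 * j t))^2 = (α t)^2 * (x t)^2 * (1 - 2 * j t)^2 := by ring
    rw [he, h4, mul_one]
    have hα2 : (α t)^2 ≤ 1 := by nlinarith
    have hx2 : (x t)^2 ≤ (lam t)^2 := by nlinarith [hlam_pos t ht]
    nlinarith [sq_nonneg (x t), mul_le_mul hα2 hx2 (sq_nonneg (x t)) zero_le_one]
  have hg2sq : ∀ t : ℕ, 1 ≤ t → (α t * ((lam t)⁻¹ * x t - 1) * (1 - 2 * j t))^2 ≤ 1 := by
    intro t ht
    have h1 := hα01 t
    have h4 := hd2 t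
    have hlp := hlam_pos t ht
    have h5 : 0 ≤ (lam t)⁻¹ * x t := mul_nonneg (by positivity) (hx0 t ht)
    have h6 : (lam t)⁻¹ * x t ≤ 1 := by
      rw [inv_mul_le_iff₀ hlp, mul_one]
      exact hxle t ht
    have he : (α t * ((lam t)⁻¹ * x t - 1) * (1 - 2 * j t))^2
        = (α t)^2 * ((lam t)⁻¹ * x t - 1)^2 * (1 - 2 * j t)^2 := by ring
    rw [he, h4, mul_one]
    have hα2 : (α t)^2 ≤ 1 := by nlinarith
    have hu2 : ((lam t)⁻¹ * x t - 1)^2 ≤ 1 := by nlinarith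
    nlinarith [mul_le_mul hα2 hu2 (sq_nonneg ((lam t)⁻¹ * x t - 1)) zero_le_one]
  have hcross : ∀ t : ℕ, 1 ≤ t →
      R1 (t-1) * x t + (lam t)^2 * R2 (t-1) * ((lam t)⁻¹ * x t - 1) = 0 := by
    intro t ht
    have hlp := hlam_pos t ht
    have hln : lam t ≠ 0 := ne_of_gt hlp
    have hexp : R1 (t-1) * x t + (lam t)^2 * R2 (t-1) * ((lam t)⁻¹ * x t - 1)
        = x t * (R1 (t-1) + lam t * R2 (t-1)) - (lam t)^2 * R2 (t-1) := by
      field_simp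
      ring
    rw [hexp]
    by_cases h : R1 (t-1) = 0 ∧ R2 (t-1) = 0
    · have hxt : x t = 0 := by rw [hx t ht, if_pos h]
      rw [hxt, h.1, h.2]; ring
    · have hxt : x t = lam t ^ 2 * R2 (t-1) / (R1 (t-1) + lam t * R2 (t-1)) := by
        rw [hx t ht, if_neg h]
      rw [hxt, div_mul_cancel₀ _ (ne_of_gt (hden t ht h))]
      ring
  have hR20 : R2 0 = 0 := by
    rw [hR2]
    simp
  have hR10 : R1 0 = 0 := by
    rw [hR1]
    simp
  have key : ∀ t : ℕ, (R1 t)^2 + (lam t)^2 * (R2 t)^2 ≤ 2 * ∑ s ∈ Icc 1 t, (lam s)^2 := by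
    intro t
    induction t with
    | zero => simp [hR10, hR20]
    | succ t ih =>
      have ht1 : 1 ≤ t + 1 := by omega
      set g1 := α (t+1) * x (t+1) * (1 - 2 * j (t+1)) with hg1
      set g2 := α (t+1) * ((lam (t+1))⁻¹ * x (t+1) - 1) * (1 - 2 * j (t+1)) with hg2
      have hsum1 : R1 (t+1) = max 0 ((∑ s ∈ Icc 1 t, α s * x s * (1 - 2 * j s)) + g1) := by
        rw [hR1, Finset.sum_Icc_succ_top ht1]
      have hsum2 : R2 (t+1) = max 0 ((∑ s ∈ Icc 1 t, α s * ((lam s)⁻¹ * x s - 1) * (1 - 2 * j s)) + g2) := by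
        rw [hR2, Finset.sum_Icc_succ_top ht1]
      have hS1le : (∑ s ∈ Icc 1 t, α s * x s * (1 - 2 * j s)) ≤ R1 t := by
        rw [hR1]; exact le_max_right _ _
      have hS2le : (∑ s ∈ Icc 1 t, α s * ((lam s)⁻¹ * x s - 1) * (1 - 2 * j s)) ≤ R2 t := by
        rw [hR2]; exact le_max_right _ _
      -- squared bounds
      have hq1 : (R1 (t+1))^2 ≤ (R1 t + g1)^2 := by
        have h1 : R1 (t+1) ≤ max 0 (R1 t + g1) := by
          rw [hsum1]; exact max_le_max (le_refl 0) (by linarith)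
        have h2 : max 0 (R1 t + g1) ≤ |R1 t + g1| := max_le (abs_nonneg _) (le_abs_self _)
        have h3 : 0 ≤ R1 (t+1) := hR1n _
        have h4 : (R1 (t+1))^2 ≤ |R1 t + g1|^2 :=
          sq_le_sq' (by linarith [abs_nonneg (R1 t + g1)]) (h1.trans h2)
        rwa [sq_abs] at h4
      have hq2 : (R2 (t+1))^2 ≤ (R2 t + g2)^2 := by
        have h1 : R2 (t+1) ≤ max 0 (R2 t + g2) := by
          rw [hsum2]; exact max_le_max (le_refl 0) (by linarith)
        have h2 : max 0 (R2 t + g2) ≤ |R2 t + g2| := max_le (abs_nonneg _) (le_abs_self _)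
        have h3 : 0 ≤ R2 (t+1) := hR2n _
        have h4 : (R2 (t+1))^2 ≤ |R2 t + g2|^2 :=
          sq_le_sq' (by linarith [abs_nonneg (R2 t + g2)]) (h1.trans h2)
        rwa [sq_abs] at h4
      -- cross term zero
      have ht1' : (t+1) - 1 = t := by omega
      have hcr : R1 t * g1 + (lam (t+1))^2 * R2 t * g2 = 0 := by
        have hc := hcross (t+1) ht1
        rw [ht1'] at hc
        have : R1 t * g1 + (lam (t+1))^2 * R2 t * g2
            = α (t+1) * (1 - 2 * j (t+1)) *
              (R1 t * x (t+1) + (lam (t+1))^2 * R2 t * ((lam (t+1))⁻¹ * x (t+1) - 1)) := by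
          rw [hg1, hg2]; ring
        rw [this, hc, mul_zero]
      -- monotonicity of weighted R2 term
      have hswap : (lam (t+1))^2 * (R2 t)^2 ≤ (lam t)^2 * (R2 t)^2 := by
        rcases Nat.eq_zero_or_pos t with h | h
        · subst h; rw [hR20]; ring_nf; exact le_refl _
        · have hle := hlam_anti t (t+1) h (by omega)
          have h1 := hlam_pos (t+1) (by omega)
          have hsq : (lam (t+1))^2 ≤ (lam t)^2 := by nlinarith
          exact mul_le_mul_of_nonneg_right hsq (sq_nonneg _)
      have hg1b : g1^2 ≤ (lam (t+1))^2 := by rw [hg1]; exact hg1sq (t+1) ht1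
      have hg2b : g2^2 ≤ 1 := by rw [hg2]; exact hg2sq (t+1) ht1
      have hg2b' : (lam (t+1))^2 * g2^2 ≤ (lam (t+1))^2 := by
        have := mul_le_mul_of_nonneg_left hg2b (sq_nonneg (lam (t+1)))
        linarith
      have hrhs : (∑ s ∈ Icc 1 (t+1), (lam s)^2) = (∑ s ∈ Icc 1 t, (lam s)^2) + (lam (t+1))^2 :=
        Finset.sum_Icc_succ_top ht1 _
      have hexp : (R1 t + g1)^2 + (lam (t+1))^2 * (R2 t + g2)^2
          = (R1 t)^2 + (lam (t+1))^2 * (R2 t)^2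
            + 2 * (R1 t * g1 + (lam (t+1))^2 * R2 t * g2) + (g1^2 + (lam (t+1))^2 * g2^2) := by
        ring
      have hsq2 : (lam (t+1))^2 * (R2 (t+1))^2 ≤ (lam (t+1))^2 * (R2 t + g2)^2 :=
        mul_le_mul_of_nonneg_left hq2 (sq_nonneg _)
      rw [hrhs]
      linarith [hq1, hsq2, hexp, hcr, hg1b, hg2b', hswap, ih]
  -- bound on the sum of squared lambdas
  have hlamsq : ∀ s : ℕ, 1 ≤ s → (lam s)^2 = ε^2 * (s:ℝ)^(-(3:ℝ)/2) := by
    intro s hs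
    rw [hlam s hs, mul_pow, ← Real.rpow_natCast ((s:ℝ) ^ (-(3:ℝ)/4)) 2,
      ← Real.rpow_mul (Nat.cast_nonneg s)]
    norm_num
  have hsum : ∀ T : ℕ, 1 ≤ T → ∑ s ∈ Icc 1 T, (lam s)^2 ≤ 3 * ε^2 := by
    intro T hT
    have he : ∑ s ∈ Icc 1 T, (lam s)^2 = ε^2 * ∑ s ∈ Icc 1 T, (s:ℝ)^(-(3:ℝ)/2) := by
      rw [Finset.mul_sum]
      exact Finset.sum_congr rfl fun s hs => hlamsq s (Finset.mem_Icc.mp hs).1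
    rw [he]
    have h2 := sum_rpow_bound T hT
    have hT0 : (0:ℝ) < T := by exact_mod_cast hT
    have h3 : (0:ℝ) ≤ (T:ℝ)^(-(1:ℝ)/2) := Real.rpow_nonneg hT0.le _
    have h4 : (∑ s ∈ Icc 1 T, (s:ℝ)^(-(3:ℝ)/2)) ≤ 3 := by linarith
    calc ε^2 * ∑ s ∈ Icc 1 T, (s:ℝ)^(-(3:ℝ)/2) ≤ ε^2 * 3 :=
          mul_le_mul_of_nonneg_left h4 (sq_nonneg ε)
      _ = 3 * ε^2 := by ring
  -- final assembly
  intro T hT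
  have hT0 : (0:ℝ) < T := by exact_mod_cast hT
  have hl := hlam_pos T hT
  have hk := key T
  have hs6 : (lam T * R2 T)^2 ≤ 6 * ε^2 := by
    have h1 := hsum T hT
    have h2 := sq_nonneg (R1 T)
    have : (lam T * R2 T)^2 = (lam T)^2 * (R2 T)^2 := by ring
    linarith [this.le, this.ge]
  have hR2T : lam T * R2 T ≤ 3 * ε := by
    nlinarith [mul_nonneg hl.le (hR2n T), hε0, hs6]
  have hS2 : (∑ t ∈ Icc 1 T, α t * ((lam t)⁻¹ * x t - 1) * (1 - 2 * j t)) ≤ R2 T := by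
    rw [hR2]; exact le_max_right _ _
  have hfirst : (T : ℝ)⁻¹ * (∑ t ∈ Icc 1 T, α t * ((lam t)⁻¹ * x t - 1) * (1 - 2 * j t))
      ≤ 3 * ε / ((T : ℝ) * lam T) := by
    have hR2b : R2 T ≤ 3 * ε / lam T := by
      rw [le_div_iff₀ hl, mul_comm]; exact hR2T
    have h1 : (T : ℝ)⁻¹ * (∑ t ∈ Icc 1 T, α t * ((lam t)⁻¹ * x t - 1) * (1 - 2 * j t))
        ≤ (T:ℝ)⁻¹ * (3 * ε / lam T) :=
      mul_le_mul_of_nonneg_left (hS2.trans hR2b) (inv_nonneg.mpr hT0.le)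
    have h2 : (T:ℝ)⁻¹ * (3 * ε / lam T) = 3 * ε / ((T : ℝ) * lam T) := by
      field_simp
    linarith [h1, h2.le, h2.ge]
  refine ⟨hfirst, fun hTge => ?_⟩
  -- second bound
  have hTlam : (T:ℝ) * lam T = ε * (T:ℝ)^((1:ℝ)/4) := by
    rw [hlam T hT, show (1:ℝ)/4 = 1 + (-(3:ℝ)/4) by norm_num,
      Real.rpow_add hT0, Real.rpow_one]
    ring
  have hT14 : (0:ℝ) < (T:ℝ)^((1:ℝ)/4) := Real.rpow_pos_of_pos hT0 _
  have hq : 3 * ε / ((T:ℝ) * lam T) = 3 * ((T:ℝ)^((1:ℝ)/4))⁻¹ := by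
    rw [hTlam]
    field_simp
  have h8 : (0:ℝ) < ε^(-8:ℤ) := zpow_pos hε0 _
  have hm : (T:ℝ)^(-((1:ℝ)/4)) ≤ (ε^(-8:ℤ))^(-((1:ℝ)/4)) :=
    Real.rpow_le_rpow_of_nonpos h8 hTge (by norm_num)
  have hc : ((ε:ℝ)^(-8:ℤ))^(-((1:ℝ)/4)) = ε^2 := by
    rw [show ((ε:ℝ)^(-8:ℤ)) = ε^((-8:ℝ)) by
      rw [← Real.rpow_intCast ε (-8)]; norm_num]
    rw [← Real.rpow_natCast ε 2, ← Real.rpow_mul hε0.le]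
    norm_num
  rw [hc] at hm
  have hinv : ((T:ℝ)^((1:ℝ)/4))⁻¹ = (T:ℝ)^(-((1:ℝ)/4)) := by
    rw [Real.rpow_neg hT0.le]
  calc (T : ℝ)⁻¹ * (∑ t ∈ Icc 1 T, α t * ((lam t)⁻¹ * x t - 1) * (1 - 2 * j t))
      ≤ 3 * ε / ((T:ℝ) * lam T) := hfirst
    _ = 3 * ((T:ℝ)^((1:ℝ)/4))⁻¹ := hq
    _ = 3 * (T:ℝ)^(-((1:ℝ)/4)) := by rw [hinv]
    _ ≤ 3 * ε^2 := by linarith
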